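/- For a partition λ of r, there exists a unique element w in the set of distinguished double coset representatives of S_λ \ S_r / S_{λ'} such that the conjugate w^{-1} S_λ w intersects S_{λ'} trivially, where λ' is the conjugate (dual) partition and S_λ, S_{λ'} are the corresponding Young subgroups. -/

import Mathlib

noncomputable section
open scoped Classical
open Finset

/-- Apply a permutation of `Fin r` to a natural number (fixing numbers `≥ r`). -/
def pApp {r : ℕ} (w : Equiv.Perm (Fin r)) (x : ℕ) : ℕ :=
  if h : x < r then (w ⟨x, h⟩ : ℕ) else x

/-- Block index of position `x` (0-indexed) for the composition `c`. -/
def blockOf (c : List ℕ) (x : ℕ) : ℕ :=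
  ((Finset.range c.length).filter (fun i => (c.take (i + 1)).sum ≤ x)).card

/-- Membership in the Young subgroup of the composition `c` of `r`. -/
def inYoung {r : ℕ} (c : List ℕ) (w : Equiv.Perm (Fin r)) : Prop :=
  ∀ x : Fin r, blockOf c (pApp w (x : ℕ)) = blockOf c (x : ℕ)

/-- The number of inversions, i.e. the Coxeter length, of a permutation of `Fin r`. -/
def permLen {r : ℕ} (w : Equiv.Perm (Fin r)) : ℕ :=
  ((Finset.univ : Finset (Fin r × Fin r)).filter
    (fun p => p.1 < p.2 ∧ w p.2 < w p.1)).card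

/-- `w` has minimal length in its double coset `S_c w S_d`
(products are written so that `a · w · b` with the paper's right-action
convention corresponds to `b * w * a` for Lean's left-acting permutations). -/
def IsDistinguished {r : ℕ} (c d : List ℕ) (w : Equiv.Perm (Fin r)) : Prop :=
  ∀ a b : Equiv.Perm (Fin r), inYoung c a → inYoung d b →
    permLen w ≤ permLen (b * w * a)

/-- The conjugate (dual) partition. -/
def conjP (l : List ℕ) : List ℕ :=
  (List.range (l.foldr max 0)).map (fun i => l.countP (fun p => decide (i < p)))

/-- `l` is a partition (weakly decreasing list of positive integers). -/
def IsPartition (l : List ℕ) : Prop :=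
  l.Pairwise (· ≥ ·) ∧ ∀ p ∈ l, 0 < p

theorem Equiv.Perm.apply_inv_self {α : Type*} (f : Equiv.Perm α) (x : α) : f (f⁻¹ x) = x :=
  Equiv.apply_symm_apply f x

theorem Equiv.Perm.inv_apply_self {α : Type*} (f : Equiv.Perm α) (x : α) : f⁻¹ (f x) = x :=
  Equiv.symm_apply_apply f x

namespace Aux

def pre (c : List ℕ) (i : ℕ) : ℕ := ∑ k ∈ Finset.range i, c.getD k 0

lemma sum_take (c : List ℕ) (i : ℕ) : (c.take i).sum = pre c i := by
  induction c generalizing i with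
  | nil => simp [pre, List.getD]
  | cons a t ih =>
    cases i with
    | zero => simp [pre]
    | succ n =>
      simp only [List.take_succ_cons, List.sum_cons, pre, Finset.sum_range_succ']
      simp [ih n, pre, add_comm]

lemma pre_mono (c : List ℕ) : Monotone (pre c) := by
  intro i j h
  exact Finset.sum_le_sum_of_subset (Finset.range_subset_range.2 h)

lemma pre_succ (c : List ℕ) (i : ℕ) : pre c (i+1) = pre c i + c.getD i 0 :=
  Finset.sum_range_succ _ _

lemma mem_iff_lt_card (S : Finset ℕ) (hdc : ∀ a b : ℕ, a ≤ b → b ∈ S → a ∈ S) (i : ℕ) :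
    i ∈ S ↔ i < S.card := by
  constructor
  · intro hi
    have hsub : Finset.range (i+1) ⊆ S := by
      intro a ha
      exact hdc a i (Nat.lt_succ_iff.mp (Finset.mem_range.mp ha)) hi
    have := Finset.card_le_card hsub
    simpa using this
  · intro hlt
    by_contra hi
    have hsub : S ⊆ Finset.range i := by
      intro b hb
      rw [Finset.mem_range]
      by_contra hbi
      exact hi (hdc i b (Nat.le_of_not_lt hbi) hb)
    have := Finset.card_le_card hsub
    simp at this
    omega

lemma blockOf_eq_card (c : List ℕ) (x : ℕ) :
    blockOf c x = ((Finset.range c.length).filter (fun i => pre c (i+1) ≤ x)).card := by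
  unfold blockOf
  congr 1
  ext i
  simp [sum_take]

lemma lt_blockOf_iff (c : List ℕ) (x i : ℕ) :
    i < blockOf c x ↔ (i < c.length ∧ pre c (i+1) ≤ x) := by
  rw [blockOf_eq_card]
  rw [← mem_iff_lt_card]
  · simp
  · intro a b hab hb
    simp only [Finset.mem_filter, Finset.mem_range] at *
    exact ⟨lt_of_le_of_lt hab hb.1,
      le_trans (pre_mono c (by omega)) hb.2⟩

lemma blockOf_eq (c : List ℕ) (x k : ℕ) (hk : k < c.length)
    (h1 : pre c k ≤ x) (h2 : x < pre c (k+1)) : blockOf c x = k := by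
  have hiff : ∀ i, i < blockOf c x ↔ i < k := by
    intro i
    rw [lt_blockOf_iff]
    constructor
    · rintro ⟨_, hp⟩
      by_contra hik
      have : pre c (k+1) ≤ x := le_trans (pre_mono c (by omega : k+1 ≤ i+1)) hp
      omega
    · intro hik
      exact ⟨by omega, le_trans (pre_mono c (by omega : i+1 ≤ k)) h1⟩
  have h1' := hiff (blockOf c x)
  have h2' := hiff k
  omega

lemma blockOf_spec (c : List ℕ) (x : ℕ) (hx : x < pre c c.length) :
    blockOf c x < c.length ∧ pre c (blockOf c x) ≤ x ∧ x < pre c (blockOf c x + 1) := by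
  have hble : blockOf c x ≤ c.length := by
    rw [blockOf_eq_card]
    exact le_trans (Finset.card_filter_le _ _) (by simp)
  have hlen : 0 < c.length := by
    by_contra h
    simp only [not_lt, Nat.le_zero] at h
    rw [h] at hx; simp [pre] at hx
  have hlt : blockOf c x < c.length := by
    rcases Nat.lt_or_ge (blockOf c x) c.length with h | h
    · exact h
    have heq : blockOf c x = c.length := le_antisymm hble h
    have : c.length - 1 < blockOf c x := by omega
    rw [lt_blockOf_iff] at this
    have : pre c c.length ≤ x := by
      have := this.2
      have he : c.length - 1 + 1 = c.length := by omega
      rwa [he] at this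
    omega
  refine ⟨hlt, ?_, ?_⟩
  · rcases Nat.eq_zero_or_pos (blockOf c x) with h | h
    · simp [h, pre]
    · have : blockOf c x - 1 < blockOf c x := by omega
      rw [lt_blockOf_iff] at this
      have := this.2
      have he : blockOf c x - 1 + 1 = blockOf c x := by omega
      rwa [he] at this
  · by_contra h
    have : blockOf c x < blockOf c x := by
      rw [lt_blockOf_iff]
      exact ⟨hlt, Nat.le_of_not_lt h⟩
    omega

lemma blockOf_mono (c : List ℕ) {x y : ℕ} (h : x ≤ y) : blockOf c x ≤ blockOf c y := by
  rw [blockOf_eq_card, blockOf_eq_card]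
  apply Finset.card_le_card
  intro i hi
  simp only [Finset.mem_filter] at *
  exact ⟨hi.1, le_trans hi.2 h⟩

lemma lt_of_blockOf_lt (c : List ℕ) {x y : ℕ} (h : blockOf c x < blockOf c y) : x < y := by
  by_contra hxy
  exact absurd (blockOf_mono c (Nat.le_of_not_lt hxy)) (by omega)

end Aux

namespace Aux

section Part
variable (l : List ℕ)

def lam (i : ℕ) : ℕ := l.getD i 0
def lam' (j : ℕ) : ℕ := l.countP (fun p => decide (j < p))

lemma lam_anti (hl : IsPartition l) {i j : ℕ} (h : i ≤ j) : lam l j ≤ lam l i := by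
  rcases Nat.lt_or_ge j l.length with hj | hj
  · have hi : i < l.length := lt_of_le_of_lt h hj
    unfold lam
    rw [List.getD_eq_getElem _ _ hi, List.getD_eq_getElem _ _ hj]
    rcases Nat.eq_or_lt_of_le h with rfl | hlt
    · exact le_refl _
    · exact hl.1.rel_get_of_lt (a := ⟨i, hi⟩) (b := ⟨j, hj⟩) (by simpa using hlt)
  · unfold lam
    rw [List.getD_eq_default _ _ hj]
    exact Nat.zero_le _

lemma lam_pos_iff (hl : IsPartition l) (i : ℕ) : 0 < lam l i ↔ i < l.length := by
  constructor
  · intro h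
    by_contra hi
    unfold lam at h
    rw [List.getD_eq_default _ _ (Nat.le_of_not_lt hi)] at h
    omega
  · intro h
    unfold lam
    rw [List.getD_eq_getElem _ _ h]
    exact hl.2 _ (List.getElem_mem h)

lemma le_foldr_max {p : ℕ} (hp : p ∈ l) : p ≤ l.foldr max 0 := by
  induction l with
  | nil => simp at hp
  | cons a t ih =>
    rcases List.mem_cons.mp hp with rfl | hpt
    · exact le_max_left _ _
    · exact le_trans (ih hpt) (le_max_right _ _)

lemma lam_le_max (hi : i < l.length) : lam l i ≤ l.foldr max 0 := by
  unfold lam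
  rw [List.getD_eq_getElem _ _ hi]
  exact le_foldr_max l (List.getElem_mem hi)

lemma countP_eq_sum (c : List ℕ) (p : ℕ → Bool) :
    c.countP p = ∑ i ∈ Finset.range c.length, if p (c.getD i 0) then 1 else 0 := by
  induction c with
  | nil => simp
  | cons a t ih =>
    rw [List.countP_cons]
    simp only [List.length_cons, Finset.sum_range_succ']
    simp [ih, add_comm]

lemma lam'_eq_card (j : ℕ) :
    lam' l j = ((Finset.range l.length).filter (fun i => j < lam l i)).card := by
  unfold lam' lam
  rw [countP_eq_sum, Finset.card_filter]
  apply Finset.sum_congr rfl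
  intro i _
  by_cases h : j < l.getD i 0 <;> simp [h]

lemma lt_lam'_iff (hl : IsPartition l) (i j : ℕ) : i < lam' l j ↔ j < lam l i := by
  rw [lam'_eq_card]
  rw [← mem_iff_lt_card]
  · simp only [Finset.mem_filter, Finset.mem_range]
    constructor
    · exact fun h => h.2
    · intro h
      exact ⟨(lam_pos_iff l hl i).1 (by omega), h⟩
  · intro a b hab hb
    simp only [Finset.mem_filter, Finset.mem_range] at *
    exact ⟨lt_of_le_of_lt hab hb.1, lt_of_lt_of_le hb.2 (lam_anti l hl hab)⟩

lemma conjP_length : (conjP l).length = l.foldr max 0 := by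
  simp [conjP]

lemma conjP_getD (j : ℕ) : (conjP l).getD j 0 = lam' l j := by
  rcases Nat.lt_or_ge j (l.foldr max 0) with hj | hj
  · have hj' : j < (conjP l).length := by rwa [conjP_length]
    rw [List.getD_eq_getElem _ _ hj']
    simp [conjP, lam']
  · rw [List.getD_eq_default _ _ (by rwa [conjP_length])]
    unfold lam'
    symm
    rw [List.countP_eq_zero]
    intro p hp
    simp only [decide_eq_true_eq]
    exact fun h => absurd (le_foldr_max l hp) (by omega)

def pre' (j : ℕ) : ℕ := ∑ k ∈ Finset.range j, lam' l k

lemma pre_conjP (i : ℕ) : pre (conjP l) i = pre' l i := by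
  unfold pre pre'
  exact Finset.sum_congr rfl fun k _ => conjP_getD l k

lemma pre_lam (i : ℕ) : pre l (i+1) = pre l i + lam l i := pre_succ l i

lemma pre'_succ (j : ℕ) : pre' l (j+1) = pre' l j + lam' l j := Finset.sum_range_succ _ _

lemma pre'_mono : Monotone (pre' l) := by
  intro i j h
  exact Finset.sum_le_sum_of_subset (Finset.range_subset_range.2 h)

lemma pre_length : pre l l.length = l.sum := by
  rw [← sum_take, List.take_length]

lemma pre_le_sum (i : ℕ) : pre l i ≤ l.sum := by
  rcases Nat.le_total i l.length with h | h
  · rw [← pre_length]; exact pre_mono l h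
  · rw [← pre_length]
    unfold pre
    rw [← Finset.sum_subset (Finset.range_subset_range.2 h)]
    intro k hk hk'
    simp only [Finset.mem_range, not_lt] at hk'
    exact List.getD_eq_default _ _ hk'

lemma pre'_max (hl : IsPartition l) : pre' l (l.foldr max 0) = l.sum := by
  unfold pre'
  have : ∀ k, lam' l k = ∑ i ∈ Finset.range l.length, if k < lam l i then 1 else 0 := by
    intro k
    rw [lam'_eq_card, Finset.card_filter]
  simp only [this]
  rw [Finset.sum_comm]
  rw [← pre_length]
  unfold pre
  apply Finset.sum_congr rfl
  intro i hi
  simp only [Finset.mem_range] at hi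
  have h1 : (Finset.range (l.foldr max 0)).filter (fun k => k < lam l i) =
      Finset.range (lam l i) := by
    ext k
    simp only [Finset.mem_filter, Finset.mem_range]
    constructor
    · exact fun h => h.2
    · intro h
      exact ⟨lt_of_lt_of_le h (lam_le_max l hi), h⟩
  calc ∑ k ∈ Finset.range (l.foldr max 0), (if k < lam l i then 1 else 0)
      = ((Finset.range (l.foldr max 0)).filter (fun k => k < lam l i)).card := by
        rw [Finset.card_filter]
    _ = lam l i := by rw [h1, Finset.card_range]
    _ = l.getD i 0 := rfl

end Part
end Aux

namespace Aux

variable (l : List ℕ)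

def fF (x : ℕ) : ℕ := pre' l (x - pre l (blockOf l x)) + blockOf l x
def gF (y : ℕ) : ℕ := pre l (y - pre' l (blockOf (conjP l) y)) + blockOf (conjP l) y

variable (hl : IsPartition l)
include hl

/-- decomposition of `x < l.sum` as `pre l i + j`. -/
lemma decomp {x : ℕ} (hx : x < l.sum) :
    blockOf l x < l.length ∧ pre l (blockOf l x) ≤ x ∧
      x - pre l (blockOf l x) < lam l (blockOf l x) := by
  have h := blockOf_spec l x (by rwa [pre_length])
  refine ⟨h.1, h.2.1, ?_⟩
  have := h.2.2
  rw [pre_lam] at this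
  omega

lemma blockOf_pre_add {i j : ℕ} (hi : i < l.length) (hj : j < lam l i) :
    blockOf l (pre l i + j) = i := by
  apply blockOf_eq l _ i hi (Nat.le_add_right _ _)
  rw [pre_lam]
  omega

lemma blockOf'_pre'_add {i j : ℕ} (hj : j < l.foldr max 0) (hi : i < lam' l j) :
    blockOf (conjP l) (pre' l j + i) = j := by
  apply blockOf_eq (conjP l) _ j (by rwa [conjP_length])
  · rw [pre_conjP]
    exact Nat.le_add_right _ _
  · rw [pre_conjP, pre'_succ]
    omega

lemma fF_eq {i j : ℕ} (hi : i < l.length) (hj : j < lam l i) :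
    fF l (pre l i + j) = pre' l j + i := by
  unfold fF
  rw [blockOf_pre_add l hl hi hj]
  congr 2
  omega

lemma gF_eq {i j : ℕ} (hj : j < l.foldr max 0) (hi : i < lam' l j) :
    gF l (pre' l j + i) = pre l i + j := by
  unfold gF
  rw [blockOf'_pre'_add l hl hj hi]
  congr 2
  omega

lemma j_lt_max {i j : ℕ} (hi : i < l.length) (hj : j < lam l i) : j < l.foldr max 0 :=
  lt_of_lt_of_le hj (lam_le_max l hi)

lemma fF_lt {i j : ℕ} (hi : i < l.length) (hj : j < lam l i) :
    pre' l j + i < l.sum := by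
  have hmax := j_lt_max l hl hi hj
  have hi' : i < lam' l j := (lt_lam'_iff l hl i j).2 hj
  have : pre' l j + i < pre' l (j+1) := by rw [pre'_succ]; omega
  have h2 : pre' l (j+1) ≤ pre' l (l.foldr max 0) := pre'_mono l (by omega)
  rw [pre'_max l hl] at h2
  omega

lemma gF_lt {i j : ℕ} (hj : j < lam l i) :
    pre l i + j < l.sum := by
  have hi : i < l.length := (lam_pos_iff l hl i).1 (by omega)
  have : pre l i + j < pre l (i+1) := by rw [pre_lam]; omega
  have h2 := pre_le_sum l (i+1)
  omega

/-- decomposition of `y < l.sum` in conj blocks. -/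
lemma decomp' {y : ℕ} (hy : y < l.sum) :
    blockOf (conjP l) y < l.foldr max 0 ∧ pre' l (blockOf (conjP l) y) ≤ y ∧
      y - pre' l (blockOf (conjP l) y) < lam' l (blockOf (conjP l) y) := by
  have h := blockOf_spec (conjP l) y
    (by rw [pre_conjP, conjP_length, pre'_max l hl]; exact hy)
  rw [conjP_length] at h
  rw [pre_conjP, pre_conjP, pre'_succ] at h
  have := h.2.2
  exact ⟨h.1, h.2.1, by omega⟩

lemma fF_inv {x : ℕ} (hx : x < l.sum) :
    fF l x < l.sum ∧ gF l (fF l x) = x ∧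
    blockOf (conjP l) (fF l x) = x - pre l (blockOf l x) := by
  obtain ⟨h1, h2, h3⟩ := decomp l hl hx
  set i := blockOf l x with hi
  set j := x - pre l i with hj
  have hx' : x = pre l i + j := by omega
  have hmax := j_lt_max l hl h1 h3
  have hii : i < lam' l j := (lt_lam'_iff l hl i j).2 h3
  have hf : fF l x = pre' l j + i := by
    rw [hx', fF_eq l hl h1 h3]
  refine ⟨?_, ?_, ?_⟩
  · rw [hf]; exact fF_lt l hl h1 h3
  · rw [hf, gF_eq l hl hmax hii]; omega
  · rw [hf, blockOf'_pre'_add l hl hmax hii]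

lemma gF_inv {y : ℕ} (hy : y < l.sum) :
    gF l y < l.sum ∧ fF l (gF l y) = y := by
  obtain ⟨h1, h2, h3⟩ := decomp' l hl hy
  set j := blockOf (conjP l) y with hjd
  set i := y - pre' l j with hid
  have hy' : y = pre' l j + i := by omega
  have hji : j < lam l i := (lt_lam'_iff l hl i j).1 h3
  have hil : i < l.length := (lam_pos_iff l hl i).1 (by omega)
  have hg : gF l y = pre l i + j := by rw [hy', gF_eq l hl h1 h3]
  constructor
  · rw [hg]; exact gF_lt l hl hji
  · rw [hg, fF_eq l hl hil hji, hy']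
end Aux

namespace Aux
section Perm
variable {r : ℕ}

lemma pApp_coe (u : Equiv.Perm (Fin r)) (x : Fin r) : pApp u (x : ℕ) = (u x : ℕ) := by
  unfold pApp
  rw [dif_pos x.isLt]

lemma inYoung_iff (c : List ℕ) (u : Equiv.Perm (Fin r)) :
    inYoung c u ↔ ∀ x : Fin r, blockOf c ((u x : Fin r) : ℕ) = blockOf c (x : ℕ) := by
  unfold inYoung
  constructor <;> intro h x <;> have := h x <;> rwa [pApp_coe] at * 

lemma inYoung_one (c : List ℕ) : inYoung c (1 : Equiv.Perm (Fin r)) := by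
  rw [inYoung_iff]; intro x; rfl

lemma inYoung_inv (c : List ℕ) {u : Equiv.Perm (Fin r)} (h : inYoung c u) :
    inYoung c u⁻¹ := by
  rw [inYoung_iff] at *
  intro x
  have := h (u⁻¹ x)
  rw [Equiv.Perm.apply_inv_self] at this
  exact this.symm

lemma inYoung_swap (c : List ℕ) {x y : Fin r}
    (h : blockOf c (x : ℕ) = blockOf c (y : ℕ)) :
    inYoung c (Equiv.swap x y) := by
  rw [inYoung_iff]
  intro z
  rcases eq_or_ne z x with rfl | hx
  · rw [Equiv.swap_apply_left]; exact h.symm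
  rcases eq_or_ne z y with rfl | hy
  · rw [Equiv.swap_apply_right]; exact h
  · rw [Equiv.swap_apply_of_ne_of_ne hx hy]

lemma permLen_inv (u : Equiv.Perm (Fin r)) : permLen u⁻¹ = permLen u := by
  unfold permLen
  apply Finset.card_bij' (fun p _ => (u⁻¹ p.2, u⁻¹ p.1)) (fun p _ => (u p.2, u p.1))
  · intro p hp
    simp only [Finset.mem_filter, Finset.mem_univ, true_and] at *
    exact ⟨hp.2, by simpa using hp.1⟩
  · intro p hp
    simp only [Finset.mem_filter, Finset.mem_univ, true_and] at *
    exact ⟨hp.2, by simpa using hp.1⟩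
  · intro p hp; simp
  · intro p hp; simp

/-- swap of adjacent elements preserves order off the pair -/
lemma swap_adj_lt {a b : Fin r} (hab : (a : ℕ) + 1 = (b : ℕ)) {z z' : Fin r}
    (hzz : z < z') (hne : ¬(z = a ∧ z' = b)) :
    Equiv.swap a b z < Equiv.swap a b z' := by
  have key : ∀ w : Fin r, ((Equiv.swap a b) w : ℕ) =
      if (w : ℕ) = (a : ℕ) then (b : ℕ) else if (w : ℕ) = (b : ℕ) then (a : ℕ) else (w : ℕ) := by
    intro w
    rw [Equiv.swap_apply_def]
    split_ifs with h1 h2 h3 h4 <;> simp_all [Fin.ext_iff]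
  have hnev : ¬((z : ℕ) = (a : ℕ) ∧ (z' : ℕ) = (b : ℕ)) := by
    intro hc; exact hne ⟨Fin.ext hc.1, Fin.ext hc.2⟩
  rw [Fin.lt_def] at hzz ⊢
  rw [key z, key z']
  split_ifs <;> omega

lemma permLen_swap_mul (u : Equiv.Perm (Fin r)) {a b : Fin r}
    (hab : (a : ℕ) + 1 = (b : ℕ)) (h : u⁻¹ b < u⁻¹ a) :
    permLen (Equiv.swap a b * u) + 1 = permLen u := by
  set s := Equiv.swap a b with hs
  have hab' : a < b := by rw [Fin.lt_def]; omega
  have hset : (Finset.univ : Finset (Fin r × Fin r)).filter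
      (fun p => p.1 < p.2 ∧ (s * u) p.2 < (s * u) p.1) =
      ((Finset.univ : Finset (Fin r × Fin r)).filter
        (fun p => p.1 < p.2 ∧ u p.2 < u p.1)).erase (u⁻¹ b, u⁻¹ a) := by
    ext ⟨p, q⟩
    simp only [Finset.mem_filter]
    simp only [Finset.mem_filter, Finset.mem_erase, Finset.mem_univ, true_and,
      Equiv.Perm.mul_apply, Ne, Prod.mk.injEq, not_and]
    constructor
    · rintro ⟨hpq, hinv⟩
      have huq : u q < u p := by
        rcases lt_trichotomy (u q) (u p) with h1 | h1 | h1
        · exact h1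
        · exact absurd (u.injective h1) hpq.ne'
        · exfalso
          by_cases hc : u p = a ∧ u q = b
          · have hp' : p = u⁻¹ a := by rw [← hc.1]; simp
            have hq' : q = u⁻¹ b := by rw [← hc.2]; simp
            rw [hp', hq'] at hpq
            exact absurd hpq (not_lt.2 (le_of_lt h))
          · exact absurd (swap_adj_lt hab h1 hc) (not_lt.2 (le_of_lt hinv))
      refine ⟨?_, hpq, huq⟩
      intro hp hq
      rw [hp] at hinv
      rw [hq] at hinv
      simp only [Equiv.Perm.apply_inv_self] at hinv
      rw [Equiv.swap_apply_right, Equiv.swap_apply_left] at hinv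
      exact absurd hinv (not_lt.2 (le_of_lt hab'))
    · rintro ⟨hne, hpq, huq⟩
      refine ⟨hpq, ?_⟩
      apply swap_adj_lt hab huq
      rintro ⟨h1, h2⟩
      apply hne
      · rw [← h2]; simp
      · rw [← h1]; simp
  have hmem : (u⁻¹ b, u⁻¹ a) ∈ (Finset.univ : Finset (Fin r × Fin r)).filter
      (fun p => p.1 < p.2 ∧ u p.2 < u p.1) := by
    simp only [Finset.mem_filter, Finset.mem_univ, true_and]
    exact ⟨h, by simp [hab']⟩
  unfold permLen
  rw [hset, Finset.card_erase_of_mem hmem]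
  have : 0 < ((Finset.univ : Finset (Fin r × Fin r)).filter
      (fun p => p.1 < p.2 ∧ u p.2 < u p.1)).card := Finset.card_pos.2 ⟨_, hmem⟩
  omega

end Perm
end Aux

namespace Aux
section Dist
variable {r : ℕ} {l : List ℕ} {u : Equiv.Perm (Fin r)}

lemma dist_adj (hd : IsDistinguished l (conjP l) u) {x y : Fin r}
    (hxy : (x : ℕ) + 1 = (y : ℕ)) (hb : blockOf l (x : ℕ) = blockOf l (y : ℕ)) :
    u x < u y := by
  by_contra hcon
  have hne : u x ≠ u y := fun h => by
    have := u.injective h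
    subst this
    omega
  have huv : u y < u x := lt_of_le_of_ne (le_of_not_gt hcon) hne.symm
  set s := Equiv.swap x y with hs
  have hy : inYoung l s := inYoung_swap l hb
  have hlen : permLen (s * u⁻¹) + 1 = permLen u⁻¹ := by
    apply permLen_swap_mul u⁻¹ hxy
    simpa using huv
  have h1 : permLen (1 * u * s) = permLen (s * u⁻¹) := by
    rw [one_mul]
    have : (u * s)⁻¹ = s * u⁻¹ := by
      rw [mul_inv_rev, hs, Equiv.swap_inv]
    rw [← this, permLen_inv]
  have := hd s 1 hy (inYoung_one _)
  rw [h1] at this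
  rw [permLen_inv] at hlen
  omega

lemma dist_adj' (hd : IsDistinguished l (conjP l) u) {a b : Fin r}
    (hab : (a : ℕ) + 1 = (b : ℕ))
    (hb : blockOf (conjP l) (a : ℕ) = blockOf (conjP l) (b : ℕ)) :
    u⁻¹ a < u⁻¹ b := by
  by_contra hcon
  have hne : u⁻¹ a ≠ u⁻¹ b := fun h => by
    have := u⁻¹.injective h
    subst this
    omega
  have huv : u⁻¹ b < u⁻¹ a := lt_of_le_of_ne (le_of_not_gt hcon) hne.symm
  set s := Equiv.swap a b with hs
  have hy : inYoung (conjP l) s := inYoung_swap (conjP l) hb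
  have hlen : permLen (s * u) + 1 = permLen u := permLen_swap_mul u hab huv
  have := hd 1 s (inYoung_one _) hy
  rw [mul_one] at this
  omega

lemma blockOf_between {c : List ℕ} {x y t : ℕ} (hxt : x ≤ t) (hty : t ≤ y)
    (h : blockOf c x = blockOf c y) : blockOf c t = blockOf c x := by
  have h1 := blockOf_mono c hxt
  have h2 := blockOf_mono c hty
  omega

lemma dist_mono (hd : IsDistinguished l (conjP l) u) {x y : Fin r}
    (hxy : x < y) (hb : blockOf l (x : ℕ) = blockOf l (y : ℕ)) :
    u x < u y := by
  rw [Fin.lt_def] at hxy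
  obtain ⟨n, hn⟩ : ∃ n, (y : ℕ) = (x : ℕ) + n + 1 := ⟨(y : ℕ) - (x : ℕ) - 1, by omega⟩
  clear hxy
  induction n generalizing y with
  | zero => exact dist_adj hd (by omega) hb
  | succ n ih =>
    have htlt : (x : ℕ) + n + 1 < r := by have := y.isLt; omega
    set t : Fin r := ⟨(x : ℕ) + n + 1, htlt⟩ with ht
    have hbt : blockOf l (t : ℕ) = blockOf l (x : ℕ) :=
      blockOf_between (by simp [ht]; omega) (by simp [ht]; omega) hb
    exact lt_trans (ih hbt.symm rfl) (dist_adj hd (by simp [ht]; omega) (by rw [hbt, hb]))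

lemma dist_mono' (hd : IsDistinguished l (conjP l) u) {a b : Fin r}
    (hab : a < b) (hb : blockOf (conjP l) (a : ℕ) = blockOf (conjP l) (b : ℕ)) :
    u⁻¹ a < u⁻¹ b := by
  rw [Fin.lt_def] at hab
  obtain ⟨n, hn⟩ : ∃ n, (b : ℕ) = (a : ℕ) + n + 1 := ⟨(b : ℕ) - (a : ℕ) - 1, by omega⟩
  clear hab
  induction n generalizing b with
  | zero => exact dist_adj' hd (by omega) hb
  | succ n ih =>
    have htlt : (a : ℕ) + n + 1 < r := by have := b.isLt; omega
    set t : Fin r := ⟨(a : ℕ) + n + 1, htlt⟩ with ht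
    have hbt : blockOf (conjP l) (t : ℕ) = blockOf (conjP l) (a : ℕ) :=
      blockOf_between (by simp [ht]; omega) (by simp [ht]; omega) hb
    exact lt_trans (ih hbt.symm rfl) (dist_adj' hd (by simp [ht]; omega) (by rw [hbt, hb]))

end Dist
end Aux

namespace Aux
section More
variable (l : List ℕ) (hl : IsPartition l)
include hl

lemma fF_mono {x y : ℕ} (hy : y < l.sum) (hxy : x < y)
    (hb : blockOf l x = blockOf l y) : fF l x < fF l y := by
  have hx : x < l.sum := lt_trans hxy hy
  obtain ⟨h1, h2, h3⟩ := decomp l hl hx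
  obtain ⟨h1', h2', h3'⟩ := decomp l hl hy
  rw [hb] at h1 h2 h3
  set i := blockOf l y
  set jx := x - pre l i with hjx
  set jy := y - pre l i with hjy
  have hxx : x = pre l i + jx := by omega
  have hyy : y = pre l i + jy := by omega
  have hjj : jx < jy := by omega
  rw [hxx, hyy, fF_eq l hl h1 h3, fF_eq l hl h1 h3']
  have hix : i < lam' l jx := (lt_lam'_iff l hl i jx).2 h3
  have hs : pre' l jx + i < pre' l (jx + 1) := by rw [pre'_succ]; omega
  have hm : pre' l (jx+1) ≤ pre' l jy := pre'_mono l (by omega)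
  omega

lemma gF_mono {a b : ℕ} (hb : b < l.sum) (hab : a < b)
    (hblk : blockOf (conjP l) a = blockOf (conjP l) b) : gF l a < gF l b := by
  have ha : a < l.sum := lt_trans hab hb
  obtain ⟨h1, h2, h3⟩ := decomp' l hl ha
  obtain ⟨h1', h2', h3'⟩ := decomp' l hl hb
  rw [hblk] at h1 h2 h3
  set j := blockOf (conjP l) b
  set ia := a - pre' l j with hia
  set ib := b - pre' l j with hib
  have haa : a = pre' l j + ia := by omega
  have hbb : b = pre' l j + ib := by omega
  have hii : ia < ib := by omega
  rw [haa, hbb, gF_eq l hl h1 h3, gF_eq l hl h1 h3']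
  have hja : j < lam l ia := (lt_lam'_iff l hl ia j).1 h3
  have hs : pre l ia + j < pre l (ia + 1) := by rw [pre_lam]; omega
  have hm : pre l (ia+1) ≤ pre l ib := pre_mono l (by omega)
  omega

omit hl

lemma card_comp_perm {n : ℕ} (u : Equiv.Perm (Fin n)) (p : Fin n → Prop) :
    (Finset.univ.filter (fun x => p (u x))).card = (Finset.univ.filter p).card := by
  classical
  rw [← Finset.card_image_of_injective (Finset.univ.filter (fun x => p (u x))) u.injective]
  congr 1
  ext y
  simp only [Finset.mem_image, Finset.mem_filter, Finset.mem_univ, true_and]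
  constructor
  · rintro ⟨x, hx, rfl⟩; exact hx
  · intro hy; exact ⟨u⁻¹ y, by simpa using hy, by simp⟩

include hl

lemma card_block' {j : ℕ} (hj : j < l.foldr max 0) :
    ((Finset.univ : Finset (Fin l.sum)).filter
      (fun y : Fin l.sum => blockOf (conjP l) (y : ℕ) = j)).card = lam' l j := by
  classical
  have hle : pre' l (j+1) ≤ l.sum := by
    rw [← pre'_max l hl]
    exact pre'_mono l (by omega)
  rw [show lam' l j = (Finset.Ico (pre' l j) (pre' l (j+1))).card by
    rw [Nat.card_Ico, pre'_succ]; omega]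
  refine Finset.card_bij' (fun (y : Fin l.sum) _ => (y : ℕ))
    (fun n hn => (⟨n, lt_of_lt_of_le (Finset.mem_Ico.mp hn).2 hle⟩ : Fin l.sum))
    ?_ ?_ ?_ ?_
  · intro y hy
    simp only [Finset.mem_filter, Finset.mem_univ, true_and] at hy
    obtain ⟨h1, h2, h3⟩ := decomp' l hl y.isLt
    rw [hy] at h2 h3
    simp only [Finset.mem_Ico]
    rw [pre'_succ]
    omega
  · intro n hn
    have hn' := Finset.mem_Ico.mp hn
    simp only [Finset.mem_filter, Finset.mem_univ, true_and]
    apply blockOf_eq (conjP l) _ j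
    · rwa [conjP_length]
    · rw [pre_conjP]; exact hn'.1
    · rw [pre_conjP]; exact hn'.2
  · intro y hy; rfl
  · intro n hn; rfl

lemma card_blocku (u : Equiv.Perm (Fin l.sum)) {j : ℕ} (hj : j < l.foldr max 0) :
    ((Finset.univ : Finset (Fin l.sum)).filter
      (fun x : Fin l.sum => blockOf (conjP l) ((u x : Fin l.sum) : ℕ) = j)).card = lam' l j := by
  rw [← card_block' l hl hj]
  refine Finset.card_bij' (fun x _ => u x) (fun y _ => u⁻¹ y) ?_ ?_ ?_ ?_
  · intro y hy
    simp only [Finset.mem_filter, Finset.mem_univ, true_and] at hy ⊢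
    exact hy
  · intro y hy
    simp only [Finset.mem_filter, Finset.mem_univ, true_and] at hy ⊢
    rwa [Equiv.Perm.apply_inv_self]
  · intro y hy; simp
  · intro y hy; simp

end More
end Aux

namespace Aux

lemma uniq_aux (l : List ℕ) (hl : IsPartition l) (u : Equiv.Perm (Fin l.sum))
    (hdist : IsDistinguished l (conjP l) u)
    (hE1 : ∀ x y : Fin l.sum, blockOf l (x : ℕ) = blockOf l (y : ℕ) →
      blockOf (conjP l) ((u x : Fin l.sum) : ℕ) = blockOf (conjP l) ((u y : Fin l.sum) : ℕ) →
      x = y)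
    (x : Fin l.sum) : ((u x : Fin l.sum) : ℕ) = fF l (x : ℕ) := by
  have hxlt : ∀ i j : ℕ, j < lam l i → pre l i + j < l.sum := fun i j h => gF_lt l hl h
  have hbx : ∀ i j : ℕ, (h : j < lam l i) → blockOf l (pre l i + j) = i := fun i j h =>
    blockOf_pre_add l hl ((lam_pos_iff l hl i).1 (by omega)) h
  have SI : ∀ i j j' : ℕ, ∀ (h : j < lam l i) (h' : j' < lam l i), j < j' →
      blockOf (conjP l) ((u ⟨pre l i + j, hxlt i j h⟩ : Fin l.sum) : ℕ) <
      blockOf (conjP l) ((u ⟨pre l i + j', hxlt i j' h'⟩ : Fin l.sum) : ℕ) := by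
    intro i j j' h h' hjj
    have hlt : (⟨pre l i + j, hxlt i j h⟩ : Fin l.sum) < ⟨pre l i + j', hxlt i j' h'⟩ := by
      rw [Fin.lt_def]; simp; omega
    have hu := dist_mono hdist hlt (by rw [hbx i j h, hbx i j' h'])
    have hble := blockOf_mono (conjP l) (le_of_lt (Fin.lt_def.mp hu))
    have hne : blockOf (conjP l) ((u ⟨pre l i + j, hxlt i j h⟩ : Fin l.sum) : ℕ) ≠
        blockOf (conjP l) ((u ⟨pre l i + j', hxlt i j' h'⟩ : Fin l.sum) : ℕ) := by
      intro he
      have heq := hE1 _ _ (by rw [hbx i j h, hbx i j' h']) he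
      have : pre l i + j = pre l i + j' := congrArg Fin.val heq
      omega
    omega
  have E3 : ∀ j i : ℕ, ∀ h : j < lam l i,
      blockOf (conjP l) ((u ⟨pre l i + j, hxlt i j h⟩ : Fin l.sum) : ℕ) = j := by
    intro j
    induction j using Nat.strong_induction_on with
    | _ j IH =>
    intro i h
    set S := (Finset.univ : Finset (Fin l.sum)).filter
      (fun x : Fin l.sum => blockOf (conjP l) ((u x : Fin l.sum) : ℕ) = j) with hS
    have hcardS : S.card = lam' l j := by
      rw [hS]
      exact card_blocku l hl u (j_lt_max l hl ((lam_pos_iff l hl i).1 (by omega)) h)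
    have hrow : ∀ x ∈ S, j < lam l (blockOf l (x : ℕ)) := by
      intro x hx
      obtain ⟨h1, h2, h3⟩ := decomp l hl x.isLt
      by_contra hcon
      have hk : (x : ℕ) - pre l (blockOf l (x : ℕ)) < j := by omega
      have hIH := IH _ hk (blockOf l (x : ℕ)) h3
      have hxx : (⟨pre l (blockOf l (x : ℕ)) + ((x : ℕ) - pre l (blockOf l (x : ℕ))),
          hxlt _ _ h3⟩ : Fin l.sum) = x := Fin.ext (by simp; omega)
      rw [hxx] at hIH
      have hxS := (Finset.mem_filter.mp hx).2
      omega
    have hinj : Set.InjOn (fun x : Fin l.sum => blockOf l (x : ℕ)) S := by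
      intro x hx y hy hxy
      have hx' := (Finset.mem_filter.mp hx).2
      have hy' := (Finset.mem_filter.mp hy).2
      exact hE1 x y hxy (by rw [hx', hy'])
    have himg : S.image (fun x : Fin l.sum => blockOf l (x : ℕ)) = Finset.range (lam' l j) := by
      apply Finset.eq_of_subset_of_card_le
      · intro i' hi'
        obtain ⟨y, hy, rfl⟩ := Finset.mem_image.mp hi'
        rw [Finset.mem_range, lt_lam'_iff l hl]
        exact hrow y hy
      · rw [Finset.card_range, ← hcardS, Finset.card_image_of_injOn hinj]
    have hi' : i ∈ Finset.range (lam' l j) := by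
      rw [Finset.mem_range, lt_lam'_iff l hl]; exact h
    rw [← himg] at hi'
    obtain ⟨x, hxS, hxi⟩ := Finset.mem_image.mp hi'
    obtain ⟨h1, h2, h3⟩ := decomp l hl x.isLt
    rw [hxi] at h2 h3
    have hxSj := (Finset.mem_filter.mp hxS).2
    set k := (x : ℕ) - pre l i with hkd
    rcases lt_trichotomy k j with hkj | hkj | hkj
    · exfalso
      have hIH := IH k hkj i h3
      have hxx : (⟨pre l i + k, hxlt i k h3⟩ : Fin l.sum) = x := Fin.ext (by simp; omega)
      rw [hxx] at hIH
      omega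
    · have hxx : (⟨pre l i + j, hxlt i j h⟩ : Fin l.sum) = x := Fin.ext (by simp; omega)
      rw [hxx]
      exact hxSj
    · exfalso
      have hxx : (⟨pre l i + k, hxlt i k h3⟩ : Fin l.sum) = x := Fin.ext (by simp; omega)
      have hSIjk := SI i j k h h3 hkj
      rw [hxx, hxSj] at hSIjk
      rcases Nat.eq_zero_or_pos j with rfl | hj0
      · omega
      · have hj1 : j - 1 < lam l i := by omega
        have hIH1 := IH (j - 1) (by omega) i hj1
        have hSI2 := SI i (j - 1) j hj1 h (by omega)
        omega
  have E4 : ∀ j i : ℕ, ∀ h : j < lam l i,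
      ((u ⟨pre l i + j, hxlt i j h⟩ : Fin l.sum) : ℕ) = pre' l j + i := by
    intro j
    have hbnd : ∀ i' : ℕ, ∀ h' : j < lam l i',
        pre' l j ≤ ((u ⟨pre l i' + j, hxlt i' j h'⟩ : Fin l.sum) : ℕ) ∧
        ((u ⟨pre l i' + j, hxlt i' j h'⟩ : Fin l.sum) : ℕ) < pre' l (j + 1) := by
      intro i' h'
      obtain ⟨g1, g2, g3⟩ := decomp' l hl (u ⟨pre l i' + j, hxlt i' j h'⟩).isLt
      rw [E3 j i' h'] at g2 g3
      rw [pre'_succ]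
      omega
    have hmono : ∀ i1 i2 : ℕ, ∀ (h1 : j < lam l i1) (h2 : j < lam l i2), i1 < i2 →
        ((u ⟨pre l i1 + j, hxlt i1 j h1⟩ : Fin l.sum) : ℕ) <
        ((u ⟨pre l i2 + j, hxlt i2 j h2⟩ : Fin l.sum) : ℕ) := by
      intro i1 i2 h1 h2 h12
      have hxlt' : (⟨pre l i1 + j, hxlt i1 j h1⟩ : Fin l.sum) < ⟨pre l i2 + j, hxlt i2 j h2⟩ := by
        rw [Fin.lt_def]; simp
        have hp : pre l (i1 + 1) ≤ pre l i2 := pre_mono l (by omega)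
        rw [pre_lam] at hp; omega
      by_contra hcon
      have hne : (u ⟨pre l i1 + j, hxlt i1 j h1⟩ : Fin l.sum) ≠ u ⟨pre l i2 + j, hxlt i2 j h2⟩ :=
        fun hc => (ne_of_lt hxlt') (u.injective hc)
      have hlt2 : (u ⟨pre l i2 + j, hxlt i2 j h2⟩ : Fin l.sum) < u ⟨pre l i1 + j, hxlt i1 j h1⟩ := by
        rw [Fin.lt_def]
        have : ((u ⟨pre l i1 + j, hxlt i1 j h1⟩ : Fin l.sum) : ℕ) ≠
            ((u ⟨pre l i2 + j, hxlt i2 j h2⟩ : Fin l.sum) : ℕ) := fun hc => hne (Fin.ext hc)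
        omega
      have := dist_mono' hdist hlt2 (by rw [E3 j i1 h1, E3 j i2 h2])
      simp only [Equiv.Perm.inv_apply_self] at this
      exact absurd this (not_lt.2 (le_of_lt hxlt'))
    have hlow : ∀ i' : ℕ, ∀ h' : j < lam l i',
        pre' l j + i' ≤ ((u ⟨pre l i' + j, hxlt i' j h'⟩ : Fin l.sum) : ℕ) := by
      intro i'
      induction i' with
      | zero => intro h'; simpa using (hbnd 0 h').1
      | succ n ihn =>
        intro h'
        have hn : j < lam l n := lt_of_lt_of_le h' (lam_anti l hl (Nat.le_succ n))
        have hh1 := ihn hn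
        have hh2 := hmono n (n + 1) hn h' (by omega)
        omega
    have hupp : ∀ t i' : ℕ, ∀ h' : j < lam l i', i' + t = lam' l j →
        ((u ⟨pre l i' + j, hxlt i' j h'⟩ : Fin l.sum) : ℕ) + t ≤ pre' l (j + 1) := by
      intro t
      induction t with
      | zero =>
        intro i' h' he
        have : i' < lam' l j := (lt_lam'_iff l hl i' j).2 h'
        omega
      | succ t iht =>
        intro i' h' he
        rcases Nat.eq_zero_or_pos t with rfl | ht
        · have := (hbnd i' h').2; omega
        · have h2 : j < lam l (i' + 1) := (lt_lam'_iff l hl (i' + 1) j).1 (by omega)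
          have hh1 := iht (i' + 1) h2 (by omega)
          have hh2 := hmono i' (i' + 1) h' h2 (by omega)
          omega
    intro i h
    have hi' : i < lam' l j := (lt_lam'_iff l hl i j).2 h
    have h1 := hlow i h
    have h2 := hupp (lam' l j - i) i h (by omega)
    have h3 : pre' l (j + 1) = pre' l j + lam' l j := pre'_succ l j
    omega
  obtain ⟨h1, h2, h3⟩ := decomp l hl x.isLt
  set i := blockOf l (x : ℕ) with hid
  set k := (x : ℕ) - pre l i with hkd
  have hxx : x = ⟨pre l i + k, hxlt i k h3⟩ := Fin.ext (by simp; omega)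
  rw [hxx, E4 k i h3]
  have : (x : ℕ) = pre l i + k := by omega
  rw [show ((⟨pre l i + k, hxlt i k h3⟩ : Fin l.sum) : ℕ) = pre l i + k from rfl]
  rw [fF_eq l hl h1 h3]

end Aux


open Aux

/-- There exists a unique distinguished double coset representative `w` of
`S_λ \ S_r / S_{λ'}` such that `w⁻¹ S_λ w ∩ S_{λ'} = {1}`. -/
theorem stmt0 (r : ℕ) (l : List ℕ) (hl : IsPartition l) (hsum : l.sum = r) :
    ∃! w : Equiv.Perm (Fin r),
      IsDistinguished l (conjP l) w ∧
      ∀ τ : Equiv.Perm (Fin r), inYoung (conjP l) τ →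
        inYoung l (w⁻¹ * τ * w) → τ = 1 := by
  subst hsum
  let w : Equiv.Perm (Fin l.sum) :=
    { toFun := fun x => ⟨fF l (x : ℕ), (fF_inv l hl x.isLt).1⟩
      invFun := fun y => ⟨gF l (y : ℕ), (gF_inv l hl y.isLt).1⟩
      left_inv := fun x => Fin.ext (by simpa using (fF_inv l hl x.isLt).2.1)
      right_inv := fun y => Fin.ext (by simpa using (gF_inv l hl y.isLt).2) }
  have hw : ∀ x : Fin l.sum, ((w x : Fin l.sum) : ℕ) = fF l (x : ℕ) := fun x => rfl
  have hwinv : ∀ y : Fin l.sum, ((w⁻¹ y : Fin l.sum) : ℕ) = gF l (y : ℕ) := fun y => rfl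
  have hwE1 : ∀ x y : Fin l.sum, blockOf l (x : ℕ) = blockOf l (y : ℕ) →
      blockOf (conjP l) ((w x : Fin l.sum) : ℕ) = blockOf (conjP l) ((w y : Fin l.sum) : ℕ) →
      x = y := by
    intro x y hbl hbl'
    have hx := (fF_inv l hl x.isLt).2.2
    have hy := (fF_inv l hl y.isLt).2.2
    rw [hw, hw, hx, hy] at hbl'
    have h2x := (decomp l hl x.isLt).2.1
    have h2y := (decomp l hl y.isLt).2.1
    rw [hbl] at hbl' h2x
    apply Fin.ext
    omega
  have hwmono : ∀ x y : Fin l.sum, x < y → blockOf l (x : ℕ) = blockOf l (y : ℕ) →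
      w x < w y := by
    intro x y hxy hb
    rw [Fin.lt_def, hw, hw]
    exact fF_mono l hl y.isLt (Fin.lt_def.mp hxy) hb
  have hwmono' : ∀ a b : Fin l.sum, a < b →
      blockOf (conjP l) (a : ℕ) = blockOf (conjP l) (b : ℕ) → w⁻¹ a < w⁻¹ b := by
    intro a b hab hb
    rw [Fin.lt_def, hwinv, hwinv]
    exact gF_mono l hl b.isLt (Fin.lt_def.mp hab) hb
  have hdistW : IsDistinguished l (conjP l) w := by
    intro a b ha hb
    unfold permLen
    apply Finset.card_le_card_of_injOn (fun p => (a⁻¹ p.1, a⁻¹ p.2))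
    · intro p hp
      simp only [Finset.coe_filter, Finset.mem_filter, Finset.mem_univ, true_and, Set.mem_setOf_eq] at hp ⊢
      obtain ⟨hpq, hwv⟩ := hp
      have ha' : ∀ z : Fin l.sum, blockOf l ((a⁻¹ z : Fin l.sum) : ℕ) = blockOf l (z : ℕ) :=
        (inYoung_iff l a⁻¹).1 (inYoung_inv l ha)
      have hb' := (inYoung_iff (conjP l) b).1 hb
      have hbne : blockOf l ((p.1 : Fin l.sum) : ℕ) ≠ blockOf l ((p.2 : Fin l.sum) : ℕ) := by
        intro he
        exact absurd (hwmono p.1 p.2 hpq he) (not_lt.2 (le_of_lt hwv))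
      have hblt : blockOf l ((p.1 : Fin l.sum) : ℕ) < blockOf l ((p.2 : Fin l.sum) : ℕ) :=
        lt_of_le_of_ne (blockOf_mono l (le_of_lt (Fin.lt_def.mp hpq))) hbne
      constructor
      · rw [Fin.lt_def]
        apply lt_of_blockOf_lt l
        rw [ha' p.1, ha' p.2]
        exact hblt
      · show (b * w * a) (a⁻¹ p.2) < (b * w * a) (a⁻¹ p.1)
        simp only [Equiv.Perm.mul_apply, Equiv.Perm.apply_inv_self]
        have hbne' : blockOf (conjP l) ((w p.2 : Fin l.sum) : ℕ) ≠
            blockOf (conjP l) ((w p.1 : Fin l.sum) : ℕ) := by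
          intro he
          have h2 := hwmono' (w p.2) (w p.1) hwv he
          simp only [Equiv.Perm.inv_apply_self] at h2
          exact absurd h2 (not_lt.2 (le_of_lt hpq))
        have hblt' : blockOf (conjP l) ((w p.2 : Fin l.sum) : ℕ) <
            blockOf (conjP l) ((w p.1 : Fin l.sum) : ℕ) :=
          lt_of_le_of_ne (blockOf_mono (conjP l) (le_of_lt (Fin.lt_def.mp hwv))) hbne'
        rw [Fin.lt_def]
        apply lt_of_blockOf_lt (conjP l)
        rw [hb' (w p.2), hb' (w p.1)]
        exact hblt'
    · intro p hp q hq hpq'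
      have h1 : a⁻¹ p.1 = a⁻¹ q.1 := congrArg Prod.fst hpq'
      have h2 : a⁻¹ p.2 = a⁻¹ q.2 := congrArg Prod.snd hpq'
      exact Prod.ext (a⁻¹.injective h1) (a⁻¹.injective h2)
  have htrivW : ∀ τ : Equiv.Perm (Fin l.sum), inYoung (conjP l) τ →
      inYoung l (w⁻¹ * τ * w) → τ = 1 := by
    intro τ hτ hcong
    have key : ∀ x : Fin l.sum, (w⁻¹ * τ * w) x = x := by
      intro x
      have hσx : w ((w⁻¹ * τ * w) x) = τ (w x) := by
        simp [Equiv.Perm.mul_apply]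
      have h1 : blockOf l (((w⁻¹ * τ * w) x : Fin l.sum) : ℕ) = blockOf l (x : ℕ) :=
        (inYoung_iff l _).1 hcong x
      have h2 : blockOf (conjP l) ((τ (w x) : Fin l.sum) : ℕ) =
          blockOf (conjP l) ((w x : Fin l.sum) : ℕ) := (inYoung_iff _ τ).1 hτ (w x)
      rw [← hσx] at h2
      exact hwE1 _ x h1 h2
    have h1 : w⁻¹ * τ * w = 1 := Equiv.ext key
    calc τ = w * (w⁻¹ * τ * w) * w⁻¹ := by group
    _ = 1 := by rw [h1]; group
  refine ⟨w, ⟨hdistW, htrivW⟩, ?_⟩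
  rintro u ⟨hdist, hint⟩
  have hE1 : ∀ x y : Fin l.sum, blockOf l (x : ℕ) = blockOf l (y : ℕ) →
      blockOf (conjP l) ((u x : Fin l.sum) : ℕ) = blockOf (conjP l) ((u y : Fin l.sum) : ℕ) →
      x = y := by
    intro x y hbl hbl'
    by_contra hxy
    set τ := Equiv.swap (u x) (u y) with hτd
    have hτ : inYoung (conjP l) τ := inYoung_swap (conjP l) hbl'
    have hcong : inYoung l (u⁻¹ * τ * u) := by
      rw [inYoung_iff]
      intro z
      simp only [Equiv.Perm.mul_apply]
      rcases eq_or_ne z x with rfl | hzx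
      · rw [hτd, Equiv.swap_apply_left]
        simp only [Equiv.Perm.inv_apply_self]
        exact hbl.symm
      rcases eq_or_ne z y with rfl | hzy
      · rw [hτd, Equiv.swap_apply_right]
        simp only [Equiv.Perm.inv_apply_self]
        exact hbl
      · rw [hτd, Equiv.swap_apply_of_ne_of_ne (fun hc => hzx (u.injective hc))
          (fun hc => hzy (u.injective hc))]
        simp
    have hτ1 := hint τ hτ hcong
    have h2 : τ (u x) = u y := Equiv.swap_apply_left _ _
    rw [hτ1] at h2
    simp only [Equiv.Perm.one_apply] at h2
    exact hxy (u.injective h2)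
  apply Equiv.ext
  intro x
  apply Fin.ext
  rw [uniq_aux l hl u hdist hE1 x]
  exact (uniq_aux l hl w hdistW hwE1 x).symm
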